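/- Let P be an ordered set of strings, let u = [i,j] ∈ Decomp_BWT(P) and put p = reverse(Dec_Pre[u]). Then the multiset {BWT(P)[k] : k ∈ [i,j]} equals the multiset obtained by taking, for each string s ∈ P.S having p as a suffix, the symbol s[|s| − |p|] if |s| > |p|, and the symbol $ if s = p. -/

import Mathlib

namespace BwtXbw

variable {α β : Type*}

/-- An ordered set of strings: a nonempty list of distinct nonempty strings over `α`
(the list order is the enumeration `t_1, …, t_n`). -/
structure OSS (α : Type*) where
  strs : List (List α)
  strs_ne : strs ≠ []
  nodup : strs.Nodup
  mem_ne : ∀ s ∈ strs, s ≠ []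

/-- Embed a symbol of `α` into `WithBot α`; `⊥` plays the role of the separator `$`,
which is smaller than every symbol of the alphabet. -/
def sym (a : α) : WithBot α := (a : WithBot α)

/-- The multi-string `m_P = t_1 $ t_2 $ ⋯ $ t_n $` over `WithBot α`. -/
def mP (P : OSS α) : List (WithBot α) :=
  (P.strs.map (fun s => s.map sym ++ [⊥])).flatten

/-- `SA` is a (0-based) suffix array for `m`: a bijection of `[0, |m|)` onto itself
listing the suffixes of `m` in increasing lexicographic order. -/
def IsSuffixArray [LinearOrder α] (m : List (WithBot α)) (SA : ℕ → ℕ) : Prop :=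
  Set.BijOn SA (Set.Iio m.length) (Set.Iio m.length) ∧
  ∀ i j : ℕ, i < j → j < m.length →
    List.Lex (· < ·) (m.drop (SA i)) (m.drop (SA j))

/-- `LRS(P)[i]` (0-based): number of symbols of `m` from position `SA i` up to (but not
including) the first separator at or after position `SA i`. -/
def lrs [LinearOrder α] (m : List (WithBot α)) (SA : ℕ → ℕ) (i : ℕ) : ℕ :=
  ((m.drop (SA i)).takeWhile (fun c => decide (c ≠ ⊥))).length

/-- Length of the longest common prefix of two lists. -/
def lcpLen [DecidableEq β] : List β → List β → ℕ
  | a :: s, b :: t => if a = b then lcpLen s t + 1 else 0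
  | _, _ => 0

/-- `LCP(P)[i] = min(LCP(m_P)[i], LRS(P)[i])` (0-based; `0` at `i = 0`). -/
def lcpP [LinearOrder α] (m : List (WithBot α)) (SA : ℕ → ℕ) (i : ℕ) : ℕ :=
  if i = 0 then 0
  else min (lcpLen (m.drop (SA (i - 1))) (m.drop (SA i))) (lrs m SA i)

/-- `Decomp_BWT(P)`: the maximal integer intervals `[u.1, u.2] ⊆ [0, |m|)` such that
`LCP(P)[k] = LRS(P)[k]` for every interior position `k ∈ [u.1+1, u.2]`. -/
def DecompBWT [LinearOrder α] (m : List (WithBot α)) (SA : ℕ → ℕ) : Set (ℕ × ℕ) :=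
  { u | u.1 ≤ u.2 ∧ u.2 < m.length ∧
        (∀ k, u.1 < k → k ≤ u.2 → lcpP m SA k = lrs m SA k) ∧
        (u.1 = 0 ∨ lcpP m SA u.1 ≠ lrs m SA u.1) ∧
        (u.2 + 1 = m.length ∨ lcpP m SA (u.2 + 1) ≠ lrs m SA (u.2 + 1)) }

/-- `Dec_Pre[u]`: the reverse of `m[SA u.1 .. SA u.1 + LRS[u.1] − 1]`. -/
def decPre [LinearOrder α] (m : List (WithBot α)) (SA : ℕ → ℕ) (u : ℕ × ℕ) :
    List (WithBot α) :=
  ((m.drop (SA u.1)).take (lrs m SA u.1)).reverse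

/-- `Prefix(←P.S)`: all prefixes (including the empty string) of the reversed strings of
`P.S`, viewed inside `WithBot α`. -/
def revPrefixes (P : OSS α) : Set (List (WithBot α)) :=
  { p | ∃ s ∈ P.strs, p <+: s.reverse.map sym }

/-- `Prefix(P.S)`: all prefixes (including the empty string) of the strings of `P.S`,
viewed inside `WithBot α`. -/
def fwdPrefixes (P : OSS α) : Set (List (WithBot α)) :=
  { p | ∃ s ∈ P.strs, p <+: s.map sym }

/-- `BWT(P)[i]` (0-based): `m[SA i − 1]` if `SA i > 0`, and the last symbol `$ = ⊥`
of `m` otherwise. -/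
def bwtArr (m : List (WithBot α)) (SA : ℕ → ℕ) (i : ℕ) : WithBot α :=
  if SA i = 0 then ⊥ else m.getD (SA i - 1) ⊥

/-- `C[c]`: the number of positions of `m` holding a symbol strictly smaller than `c`. -/
def Cfun [LinearOrder α] (m : List (WithBot α)) (c : WithBot α) : ℕ :=
  (m.filter (fun b => decide (b < c))).length

/-- The Last-to-First mapping (0-based):
`LF[i] = C[BWT[i]] + #{k < i : BWT[k] = BWT[i]}`. -/
def LF [LinearOrder α] (m : List (WithBot α)) (SA : ℕ → ℕ) (i : ℕ) : ℕ :=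
  Cfun m (bwtArr m SA i) +
    ((List.range i).filter (fun k => decide (bwtArr m SA k = bwtArr m SA i))).length

/-- The arc set `A_T(P)` on `Decomp_BWT(P)`. -/
def AT [LinearOrder α] (m : List (WithBot α)) (SA : ℕ → ℕ) :
    Set ((ℕ × ℕ) × (ℕ × ℕ)) :=
  { uv | uv.1 ∈ DecompBWT m SA ∧ uv.2 ∈ DecompBWT m SA ∧
      ∃ x, uv.1.1 ≤ x ∧ x ≤ uv.1.2 ∧ bwtArr m SA x ≠ ⊥ ∧
        uv.2.1 ≤ LF m SA x ∧ LF m SA x ≤ uv.2.2 }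

/-- Arc relation of the Aho–Corasick tree on the vertex set `Pref`:
`p` is the longest proper prefix of `q` belonging to `Pref`. -/
def ACTedge (Pref : Set (List β)) (p q : List β) : Prop :=
  p ∈ Pref ∧ q ∈ Pref ∧ p ≠ q ∧ p <+: q ∧
    ∀ r ∈ Pref, r ≠ q → r <+: q → r.length ≤ p.length

/-- `k` is a failure candidate for the position `i`: `k < i` and
`LRS[k] ≤ LCP[l]` for all `l ∈ [k+1, i]`. -/
def FailCand [LinearOrder α] (m : List (WithBot α)) (SA : ℕ → ℕ) (i k : ℕ) : Prop :=
  k < i ∧ ∀ l, k < l → l ≤ i → lrs m SA k ≤ lcpP m SA l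

/-- The arc set `A_F(P)` on `Decomp_BWT(P)`: the largest failure candidate for `u.1`
exists and lies in `v`. -/
def AF [LinearOrder α] (m : List (WithBot α)) (SA : ℕ → ℕ) :
    Set ((ℕ × ℕ) × (ℕ × ℕ)) :=
  { uv | uv.1 ∈ DecompBWT m SA ∧ uv.2 ∈ DecompBWT m SA ∧
      ∃ k, FailCand m SA uv.1.1 k ∧ (∀ k', FailCand m SA uv.1.1 k' → k' ≤ k) ∧
        uv.2.1 ≤ k ∧ k ≤ uv.2.2 }

/-- Arc relation of the Aho–Corasick failure-link graph on the vertex set `Pref`: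
`q` is the longest proper suffix of `p` belonging to `Pref`. -/
def ACFLedge (Pref : Set (List β)) (p q : List β) : Prop :=
  p ∈ Pref ∧ q ∈ Pref ∧ p ≠ q ∧ q <:+ p ∧
    ∀ r ∈ Pref, r ≠ p → r <:+ p → r.length ≤ q.length

/-- The Run-Length measure `d_B(P) = #{i : BWT[i] ≠ BWT[i+1]}` (0-based, `i` ranging
over the first `|m| − 1` positions). -/
def dB [LinearOrder α] (m : List (WithBot α)) (SA : ℕ → ℕ) : ℕ :=
  ((List.range (m.length - 1)).filter
      (fun i => decide (bwtArr m SA i ≠ bwtArr m SA (i + 1)))).length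

/-- `P` is topologically planar: for every prefix `p` of the reverse of some string of
`P.S`, the indices `r` with `p` a prefix of `reverse(t_r)` form a set of consecutive
integers. -/
def TopPlanar [DecidableEq α] (P : OSS α) : Prop :=
  ∀ p : List α, (∃ s ∈ P.strs, p <+: s.reverse) →
    ∀ r₁ r₂ r₃ : ℕ, r₁ ≤ r₂ → r₂ ≤ r₃ → r₃ < P.strs.length →
      p <+: (P.strs.getD r₁ []).reverse → p <+: (P.strs.getD r₃ []).reverse →
      p <+: (P.strs.getD r₂ []).reverse

/-- `Letter[i]`: the first symbol of the suffix of rank `i`, i.e. `m[SA i]`. -/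
def letterArr (m : List (WithBot α)) (SA : ℕ → ℕ) (i : ℕ) : WithBot α :=
  m.getD (SA i) ⊥

/-- 0-based select: the position of the `(j+1)`-st occurrence of `c` in
`f 0, f 1, …, f (N−1)`. -/
def select0 [LinearOrder α] (f : ℕ → WithBot α) (N : ℕ) (c : WithBot α) (j : ℕ) : ℕ :=
  (((List.range N).filter (fun k => decide (f k = c)))).getD j 0

/-- The inverse Last-to-First mapping (0-based):
`RLF[i] = select_{Letter[i]}(BWT, i − C[Letter[i]])`. -/
def RLF [LinearOrder α] (m : List (WithBot α)) (SA : ℕ → ℕ) (i : ℕ) : ℕ :=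
  select0 (bwtArr m SA) m.length (letterArr m SA i)
    (i - Cfun m (letterArr m SA i))

/-- `d_A(T') = #{i : T'[i] ≠ T'[i+1]}`, the number of adjacent mismatches. -/
def dA [DecidableEq β] : List β → ℕ
  | a :: b :: t => (if a = b then 0 else 1) + dA (b :: t)
  | _ => 0

/-- `T'` is valid for the block decomposition `B` (an interval partition given by the
lengths of the blocks): `T'` splits into blocks of the same lengths as those of `B`,
with the same symbol set blockwise. -/
def ValidArr [DecidableEq β] (B : List (List β)) (T' : List β) : Prop :=
  ∃ B' : List (List β),
    List.Forall₂ (fun b b' => b.length = b'.length ∧ b.toFinset = b'.toFinset) B B' ∧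
    B'.flatten = T'

/-- `T'` is optimal for the block decomposition `B`: valid and of minimal `d_A`. -/
def OptimalArr [DecidableEq β] (B : List (List β)) (T' : List β) : Prop :=
  ValidArr B T' ∧ ∀ T'' : List β, ValidArr B T'' → dA T' ≤ dA T''


lemma sym_ne_bot (a : α) : sym a ≠ (⊥ : WithBot α) := by simp [sym]

def mflat (L : List (List α)) : List (WithBot α) :=
  (L.map (fun s => s.map sym ++ [⊥])).flatten

lemma mflat_cons (s : List α) (L : List (List α)) :
    mflat (s :: L) = (s.map sym ++ [⊥]) ++ mflat L := rfl

lemma mflat_eq_append (L : List (List α)) (h : L ≠ []) :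
    ∃ w, mflat L = w ++ [⊥] := by
  induction L with
  | nil => simp at h
  | cons s L ih =>
    cases L with
    | nil => exact ⟨s.map sym, by simp [mflat]⟩
    | cons t L' =>
      obtain ⟨w, hw⟩ := ih (by simp)
      exact ⟨(s.map sym ++ [⊥]) ++ w, by rw [mflat_cons, hw]; simp⟩

lemma bot_mem_drop {m : List (WithBot α)} {w : List (WithBot α)} (hm : m = w ++ [⊥])
    {q : ℕ} (hq : q < m.length) : (⊥ : WithBot α) ∈ m.drop q := by
  subst hm
  rw [List.drop_append]
  have h1 : q ≤ w.length := by simp at hq; omega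
  have h2 : q - w.length = 0 := by omega
  rw [h2]
  simp

lemma struct_of_bot_mem [LinearOrder α] {l : List (WithBot α)} (hbot : (⊥ : WithBot α) ∈ l) :
    l = l.takeWhile (fun c => decide (c ≠ ⊥)) ++
      ⊥ :: (l.dropWhile (fun c => decide (c ≠ ⊥))).tail := by
  have hne : l.dropWhile (fun c => decide (c ≠ ⊥)) ≠ [] := by
    intro h
    rw [List.dropWhile_eq_nil_iff] at h
    simpa using h ⊥ hbot
  have hhead := List.head_dropWhile_not (fun c => decide (c ≠ ⊥)) (l := l) hne
  have hh : (l.dropWhile (fun c => decide (c ≠ ⊥))).head hne = ⊥ := by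
    simpa using hhead
  have hd : l.dropWhile (fun c => decide (c ≠ ⊥)) =
      ⊥ :: (l.dropWhile (fun c => decide (c ≠ ⊥))).tail := by
    have hd0 := List.cons_head_tail (l := l.dropWhile (fun c => decide (c ≠ (⊥ : WithBot α)))) hne
    rw [hh] at hd0
    exact hd0.symm
  conv_lhs => rw [← List.takeWhile_append_dropWhile (p := fun c => decide (c ≠ ⊥)) (l := l)]
  exact congrArg (fun z => List.takeWhile (fun c => decide (c ≠ (⊥ : WithBot α))) l ++ z) hd

lemma takeWhile_of_nobot [LinearOrder α] {p : List (WithBot α)} (hp : (⊥ : WithBot α) ∉ p)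
    (t : List (WithBot α)) :
    (p ++ ⊥ :: t).takeWhile (fun c => decide (c ≠ ⊥)) = p := by
  rw [List.takeWhile_append]
  have h : p.takeWhile (fun c => decide (c ≠ ⊥)) = p := by
    rw [List.takeWhile_eq_self_iff]
    intro a ha
    simp only [decide_eq_true_eq]
    exact fun h => hp (h ▸ ha)
  rw [h, if_pos rfl, List.takeWhile_cons]
  simp

lemma occ_iff [LinearOrder α] {p l : List (WithBot α)} (hp : (⊥ : WithBot α) ∉ p)
    (hbot : (⊥ : WithBot α) ∈ l) :
    p ++ [⊥] <+: l ↔ l.takeWhile (fun c => decide (c ≠ ⊥)) = p := by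
  constructor
  · rintro ⟨t, ht⟩
    subst ht
    rw [List.append_assoc, List.singleton_append, takeWhile_of_nobot hp]
  · intro h
    refine ⟨(l.dropWhile (fun c => decide (c ≠ ⊥))).tail, ?_⟩
    conv_rhs => rw [struct_of_bot_mem hbot]
    rw [h, List.append_assoc, List.singleton_append]

lemma lcpLen_take [DecidableEq β] : ∀ a b : List β,
    a.take (lcpLen a b) = b.take (lcpLen a b) := by
  intro a
  induction a with
  | nil => intro b; simp [lcpLen]
  | cons x a ih =>
    intro b
    cases b with
    | nil => simp [lcpLen]
    | cons y b =>
      by_cases h : x = y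
      · subst h
        simp only [lcpLen, if_true, List.take_succ_cons]
        simp only [ih b]
      · simp [lcpLen, h]

lemma le_lcpLen [DecidableEq β] : ∀ w a b : List β,
    w <+: a → w <+: b → w.length ≤ lcpLen a b := by
  intro w
  induction w with
  | nil => intro a b _ _; simp
  | cons x w ih =>
    intro a b ha hb
    obtain ⟨a', rfl⟩ := ha
    obtain ⟨b', rfl⟩ := hb
    simp only [List.cons_append, lcpLen, if_true, List.length_cons]
    exact Nat.succ_le_succ (ih _ _ ⟨a', rfl⟩ ⟨b', rfl⟩)

lemma lex_sandwich [LinearOrder β] : ∀ w a b c : List β, w <+: a → w <+: c →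
    List.Lex (· < ·) a b → List.Lex (· < ·) b c → w <+: b := by
  intro w
  induction w with
  | nil => intro a b c _ _ _ _; exact List.nil_prefix
  | cons x w ih =>
    intro a b c ha hc hab hbc
    obtain ⟨a', rfl⟩ := ha
    obtain ⟨c', rfl⟩ := hc
    cases hab with
    | cons h1 =>
      cases hbc with
      | cons h2 =>
        rw [List.cons_prefix_cons]
        exact ⟨rfl, ih _ _ _ (List.prefix_append w a') (List.prefix_append w c') h1 h2⟩
      | rel h2 => exact absurd h2 (lt_irrefl x)
    | rel h1 =>
      cases hbc with
      | cons h2 => exact absurd h1 (lt_irrefl x)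
      | rel h2 => exact absurd h1 (lt_asymm h2)

lemma filter_eq_range (n a : ℕ) (ha : a < n) :
    (List.range n).filter (fun q => decide (q = a)) = [a] := by
  induction n with
  | zero => omega
  | succ n ih =>
    rw [List.range_succ, List.filter_append]
    by_cases h : a < n
    · rw [ih h]
      have : (List.filter (fun q => decide (q = a)) [n]) = [] := by
        rw [List.filter_eq_nil_iff]
        intro x hx
        simp only [List.mem_singleton] at hx
        subst hx
        simp only [decide_eq_true_eq]
        omega
      rw [this, List.append_nil]
    · have han : a = n := by omega
      subst han
      have h0 : (List.range a).filter (fun q => decide (q = a)) = [] := by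
        rw [List.filter_eq_nil_iff]
        intro x hx
        simp only [List.mem_range] at hx
        simp only [decide_eq_true_eq]
        omega
      rw [h0]
      simp

lemma occMain [LinearOrder α] (p : List (WithBot α)) (hp : (⊥ : WithBot α) ∉ p) :
    ∀ L : List (List α),
    (((List.range (mflat L).length).filter
        (fun q => decide (p ++ [⊥] <+: (mflat L).drop q))).map
      (fun q => if q = 0 then (⊥ : WithBot α) else (mflat L).getD (q-1) ⊥) :
        Multiset (WithBot α)) =
    ((L.filter (fun s => decide (p <:+ s.map sym))).map
      (fun s => if s.length = p.length then (⊥ : WithBot α)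
        else (s.map sym).getD (s.length - p.length - 1) ⊥) : Multiset (WithBot α)) := by
  intro L
  induction L with
  | nil => simp [mflat]
  | cons s L ih =>
    have hb : (s.map sym ++ [⊥] : List (WithBot α)).length = s.length + 1 := by simp
    have hlen : (mflat (s :: L)).length = (s.length + 1) + (mflat L).length := by
      rw [mflat_cons]; simp; omega
    -- suffix drops within the first block
    have hdrop1 : ∀ q ≤ s.length,
        (mflat (s :: L)).drop q = (s.map sym).drop q ++ ⊥ :: mflat L := by
      intro q hq
      rw [mflat_cons, List.drop_append, List.drop_append]
      have h1 : q - (s.map sym).length = 0 := by simp; omega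
      have h2 : q - (s.map sym ++ [⊥] : List (WithBot α)).length = 0 := by simp; omega
      rw [h1, h2]
      simp
    have hnb : ∀ q, (⊥ : WithBot α) ∉ (s.map sym).drop q := by
      intro q hmem
      have := List.mem_of_mem_drop hmem
      simp only [List.mem_map] at this
      obtain ⟨a, _, ha⟩ := this
      exact sym_ne_bot a ha
    have hpred1 : ∀ q ≤ s.length,
        (p ++ [⊥] <+: (mflat (s :: L)).drop q) ↔ (s.map sym).drop q = p := by
      intro q hq
      rw [hdrop1 q hq, occ_iff hp (by simp), takeWhile_of_nobot (hnb q)]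
    -- split the range
    rw [hlen, List.range_add, List.filter_append, List.map_append]
    rw [show ((((List.range (s.length + 1)).filter
          (fun q => decide (p ++ [⊥] <+: (mflat (s :: L)).drop q))).map
          (fun q => if q = 0 then (⊥ : WithBot α) else (mflat (s :: L)).getD (q-1) ⊥)) ++
        ((((List.range (mflat L).length).map (fun x => s.length + 1 + x)).filter
          (fun q => decide (p ++ [⊥] <+: (mflat (s :: L)).drop q))).map
          (fun q => if q = 0 then (⊥ : WithBot α) else (mflat (s :: L)).getD (q-1) ⊥)) :
        Multiset (WithBot α)) =
      ((((List.range (s.length + 1)).filter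
          (fun q => decide (p ++ [⊥] <+: (mflat (s :: L)).drop q))).map
          (fun q => if q = 0 then (⊥ : WithBot α) else (mflat (s :: L)).getD (q-1) ⊥)) :
            Multiset (WithBot α)) +
      ((((List.range (mflat L).length).map (fun x => s.length + 1 + x)).filter
          (fun q => decide (p ++ [⊥] <+: (mflat (s :: L)).drop q))).map
          (fun q => if q = 0 then (⊥ : WithBot α) else (mflat (s :: L)).getD (q-1) ⊥)) from rfl]
    -- second summand equals the RHS for L
    have hsecond :
        ((((List.range (mflat L).length).map (fun x => s.length + 1 + x)).filter
          (fun q => decide (p ++ [⊥] <+: (mflat (s :: L)).drop q))).map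
          (fun q => if q = 0 then (⊥ : WithBot α) else (mflat (s :: L)).getD (q-1) ⊥) :
            Multiset (WithBot α)) =
        ((L.filter (fun s => decide (p <:+ s.map sym))).map
          (fun s => if s.length = p.length then (⊥ : WithBot α)
            else (s.map sym).getD (s.length - p.length - 1) ⊥) : Multiset (WithBot α)) := by
      rw [List.filter_map, List.map_map]
      have hpred2 : ∀ q' ∈ List.range (mflat L).length,
          ((fun q => decide (p ++ [⊥] <+: (mflat (s :: L)).drop q)) ∘
            (fun x => s.length + 1 + x)) q' =
          (fun q => decide (p ++ [⊥] <+: (mflat L).drop q)) q' := by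
        intro q' _
        simp only [Function.comp_apply]
        apply decide_eq_decide.mpr
        rw [mflat_cons]
        rw [show s.length + 1 + q' = (s.map sym ++ [⊥] : List (WithBot α)).length + q' by
          rw [hb]]
        rw [List.drop_length_add_append]
      rw [List.filter_congr hpred2]
      have hg2 : ∀ q' ∈ (List.range (mflat L).length).filter
          (fun q => decide (p ++ [⊥] <+: (mflat L).drop q)),
          ((fun q => if q = 0 then (⊥ : WithBot α) else (mflat (s :: L)).getD (q-1) ⊥) ∘
            (fun x => s.length + 1 + x)) q' =
          (fun q => if q = 0 then (⊥ : WithBot α) else (mflat L).getD (q-1) ⊥) q' := by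
        intro q' _
        simp only [Function.comp_apply]
        have hne : s.length + 1 + q' ≠ 0 := by omega
        rw [if_neg hne]
        rcases Nat.eq_zero_or_pos q' with h0 | hpos
        · subst h0
          rw [if_pos rfl, mflat_cons]
          have : s.length + 1 + 0 - 1 = s.length := by omega
          rw [this]
          rw [List.getD_append _ _ _ _ (by simp)]
          rw [List.getD_append_right _ _ _ _ (by simp)]
          simp
        · rw [if_neg (by omega), mflat_cons]
          rw [List.getD_append_right _ _ _ _ (by simp; omega)]
          congr 1
          simp
          omega
      rw [List.map_congr_left hg2]
      exact ih
    rw [hsecond]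
    -- first summand
    rw [List.filter_cons]
    by_cases hps : p <:+ s.map sym
    · have hple : p.length ≤ s.length := by
        have := hps.length_le
        simpa using this
      have hfilter1 : (List.range (s.length + 1)).filter
          (fun q => decide (p ++ [⊥] <+: (mflat (s :: L)).drop q)) =
          [s.length - p.length] := by
        rw [List.filter_congr (q := fun q => decide (q = s.length - p.length)) ?_]
        · exact filter_eq_range _ _ (by omega)
        · intro q hq
          simp only [List.mem_range] at hq
          apply decide_eq_decide.mpr
          rw [hpred1 q (by omega)]
          constructor
          · intro hdq
            have hl := congrArg List.length hdq
            simp only [List.length_drop, List.length_map] at hl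
            omega
          · intro hq0
            subst hq0
            have h := List.suffix_iff_eq_drop.mp hps
            simp only [List.length_map] at h
            exact h.symm
      rw [hfilter1, if_pos (by simpa using hps)]
      rw [show ((s :: List.filter (fun s => decide (p <:+ List.map sym s)) L).map
          (fun s => if s.length = p.length then (⊥ : WithBot α)
            else (s.map sym).getD (s.length - p.length - 1) ⊥)) =
        ((if s.length = p.length then (⊥ : WithBot α)
            else (s.map sym).getD (s.length - p.length - 1) ⊥) ::
          ((List.filter (fun s => decide (p <:+ List.map sym s)) L).map
          (fun s => if s.length = p.length then (⊥ : WithBot α)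
            else (s.map sym).getD (s.length - p.length - 1) ⊥))) from rfl]
      rw [show (([s.length - p.length]).map
          (fun q => if q = 0 then (⊥ : WithBot α) else (mflat (s :: L)).getD (q-1) ⊥)) =
        [(if s.length - p.length = 0 then (⊥ : WithBot α)
            else (mflat (s :: L)).getD (s.length - p.length - 1) ⊥)] from rfl]
      have hgf : (if s.length - p.length = 0 then (⊥ : WithBot α)
            else (mflat (s :: L)).getD (s.length - p.length - 1) ⊥) =
          (if s.length = p.length then (⊥ : WithBot α)
            else (s.map sym).getD (s.length - p.length - 1) ⊥) := by
        by_cases he : s.length = p.length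
        · rw [if_pos (by omega), if_pos he]
        · rw [if_neg (by omega), if_neg he, mflat_cons]
          rw [List.getD_append _ _ _ _ (by simp; omega)]
          rw [List.getD_append _ _ _ _ (by simp; omega)]
      rw [hgf]
      rw [← Multiset.cons_coe, ← Multiset.cons_coe]
      rfl
    · have hfilter1 : (List.range (s.length + 1)).filter
          (fun q => decide (p ++ [⊥] <+: (mflat (s :: L)).drop q)) = [] := by
        rw [List.filter_eq_nil_iff]
        intro q hq
        simp only [List.mem_range] at hq
        simp only [decide_eq_true_eq]
        rw [hpred1 q (by omega)]
        intro hdq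
        exact hps (hdq ▸ List.drop_suffix q (s.map sym))
      rw [hfilter1, if_neg (by simpa using hps)]
      simp


theorem bwt_multiset_on_interval [Fintype α] [LinearOrder α] (P : OSS α)
    (SA : ℕ → ℕ) (hSA : IsSuffixArray (mP P) SA)
    (u : ℕ × ℕ) (hu : u ∈ DecompBWT (mP P) SA) :
    (((List.range' u.1 (u.2 - u.1 + 1)).map (bwtArr (mP P) SA) :
        List (WithBot α)) : Multiset (WithBot α)) =
    (((P.strs.filter
          (fun s => decide ((decPre (mP P) SA u).reverse <:+ s.map sym))).map
        (fun s =>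
          if s.length = (decPre (mP P) SA u).length then (⊥ : WithBot α)
          else (s.map sym).getD (s.length - (decPre (mP P) SA u).length - 1) ⊥) :
        List (WithBot α)) : Multiset (WithBot α)) := by
  obtain ⟨hij, hjN, hint, hLb, hRb⟩ := hu
  set m := mP P with hm
  obtain ⟨hbij, hlex⟩ := hSA
  obtain ⟨w, hw⟩ := mflat_eq_append P.strs P.strs_ne
  have hmw : m = w ++ [⊥] := hw
  have hbotmem : ∀ q < m.length, (⊥ : WithBot α) ∈ m.drop q := fun q hq =>
    bot_mem_drop hmw hq
  have hmaps : ∀ k < m.length, SA k < m.length := fun k hk => hbij.mapsTo hk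
  set p := (m.drop (SA u.1)).takeWhile (fun c => decide (c ≠ ⊥)) with hpdef
  have hp : (⊥ : WithBot α) ∉ p := by
    intro hmem
    have := List.mem_takeWhile_imp hmem
    simp at this
  have hdecPre : decPre m SA u = p.reverse := by
    unfold decPre lrs
    rw [hpdef]
    congr 1
    exact (List.prefix_iff_eq_take.mp (List.takeWhile_prefix _)).symm
  have hplen : lrs m SA u.1 = p.length := rfl
  have htw : ∀ l : List (WithBot α),
      p ++ [⊥] <+: l → l.takeWhile (fun c => decide (c ≠ ⊥)) = p := by
    rintro l ⟨t, rfl⟩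
    rw [List.append_assoc, List.singleton_append, takeWhile_of_nobot hp]
  have hiN : u.1 < m.length := lt_of_le_of_lt hij hjN
  -- A1: every rank in the interval has p⊥ as prefix of its suffix
  have hA1 : ∀ k, u.1 ≤ k → k ≤ u.2 → p ++ [⊥] <+: m.drop (SA k) := by
    intro k hk1
    induction k, hk1 using Nat.le_induction with
    | base =>
      intro _
      exact (occ_iff hp (hbotmem _ (hmaps _ hiN))).mpr rfl
    | succ k hk ih =>
      intro hk2
      have hprev := ih (by omega)
      have hk1N : k + 1 < m.length := lt_of_le_of_lt hk2 hjN
      have hbotb : (⊥ : WithBot α) ∈ m.drop (SA (k+1)) := hbotmem _ (hmaps _ hk1N)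
      set a := m.drop (SA k) with hadef
      set b := m.drop (SA (k+1)) with hbdef
      set t := lrs m SA (k+1) with htdef
      have hkin := hint (k+1) (by omega) hk2
      have hlcp : min (lcpLen a b) t = t := by
        have h2 := hkin
        unfold lcpP at h2
        rw [if_neg (Nat.succ_ne_zero k)] at h2
        simpa using h2
      have hte : t ≤ lcpLen a b := by omega
      have htake : a.take t = b.take t := by
        have h1 := lcpLen_take a b
        have hm1 : min t (lcpLen a b) = t := by omega
        calc a.take t = (a.take (lcpLen a b)).take t := by rw [List.take_take, hm1]
          _ = (b.take (lcpLen a b)).take t := by rw [h1]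
          _ = b.take t := by rw [List.take_take, hm1]
      obtain ⟨ra, hra⟩ := hprev
      have ha : a = p ++ ⊥ :: ra := by rw [← hra]; simp
      have htb_len : (b.takeWhile (fun c => decide (c ≠ ⊥))).length = t := rfl
      have htb : b.takeWhile (fun c => decide (c ≠ ⊥)) = b.take t := by
        conv_lhs => rw [List.prefix_iff_eq_take.mp (List.takeWhile_prefix _)]
        rw [htb_len]
      rcases lt_trichotomy t p.length with hlt | heq | hgt
      · -- contradiction with sorted order
        have htbp : b.takeWhile (fun c => decide (c ≠ ⊥)) = p.take t := by
          rw [htb, ← htake, ha, List.take_append]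
          have h0 : t - p.length = 0 := by omega
          rw [h0]
          simp
        have hb2 : b = p.take t ++
            ⊥ :: (b.dropWhile (fun c => decide (c ≠ ⊥))).tail := by
          conv_lhs => rw [struct_of_bot_mem hbotb]
          rw [htbp]
        have ha2 : a = p.take t ++ (p.drop t ++ ⊥ :: ra) := by
          rw [ha, ← List.append_assoc, List.take_append_drop]
        have hdropne : p.drop t ≠ [] := by
          rw [Ne, List.drop_eq_nil_iff]
          omega
        obtain ⟨x, xs, hxxs⟩ := List.exists_cons_of_ne_nil hdropne
        have hxne : x ≠ ⊥ := by
          have hxm : x ∈ p := List.mem_of_mem_drop (hxxs ▸ (List.mem_cons_self : x ∈ x :: xs))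
          exact fun h => hp (h ▸ hxm)
        have hlexba : List.Lex (· < ·) b a := by
          rw [hb2, ha2, hxxs]
          exact List.Lex.append_left _ (List.Lex.rel hxne.bot_lt) _
        exact absurd (hlex k (k+1) (by omega) hk1N) (asymm hlexba)
      · -- t = |p|
        have htbp : b.takeWhile (fun c => decide (c ≠ ⊥)) = p := by
          rw [htb, ← htake, ha, heq, List.take_left]
        exact (occ_iff hp hbotb).mpr htbp
      · -- t > |p|
        have h1 : a.take (p.length + 1) = b.take (p.length + 1) := by
          have hm1 : min (p.length + 1) t = p.length + 1 := by omega
          calc a.take (p.length + 1) = (a.take t).take (p.length + 1) := by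
                rw [List.take_take, hm1]
            _ = (b.take t).take (p.length + 1) := by rw [htake]
            _ = b.take (p.length + 1) := by rw [List.take_take, hm1]
        have h2 : a.take (p.length + 1) = p ++ [⊥] := by
          rw [ha, List.take_append]
          have h3 : p.length + 1 - p.length = 1 := by omega
          rw [h3, List.take_of_length_le (by omega)]
          simp
        rw [List.prefix_iff_eq_take]
        have h4 : (p ++ [⊥]).length = p.length + 1 := by simp
        rw [h4, ← h1, h2]
  -- A2: conversely, any rank whose suffix has prefix p⊥ lies in the interval
  have hA2 : ∀ k, k < m.length → p ++ [⊥] <+: m.drop (SA k) →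
      u.1 ≤ k ∧ k ≤ u.2 := by
    intro k hkN hpref
    constructor
    · by_contra hlt
      push_neg at hlt
      have hi0 : u.1 ≠ 0 := by omega
      have hprev : p ++ [⊥] <+: m.drop (SA (u.1 - 1)) := by
        rcases eq_or_lt_of_le (show k ≤ u.1 - 1 by omega) with heq | hlt2
        · rw [← heq]; exact hpref
        · exact lex_sandwich _ _ _ _ hpref (hA1 u.1 le_rfl hij)
            (hlex k (u.1 - 1) hlt2 (by omega)) (hlex (u.1 - 1) u.1 (by omega) hiN)
      have hcontra : lcpP m SA u.1 = lrs m SA u.1 := by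
        unfold lcpP
        rw [if_neg hi0]
        have hge := le_lcpLen (p ++ [⊥]) _ _ hprev (hA1 u.1 le_rfl hij)
        simp only [List.length_append, List.length_singleton] at hge
        rw [hplen]
        apply min_eq_right
        omega
      rcases hLb with h0 | hne
      · exact hi0 h0
      · exact hne hcontra
    · by_contra hgt
      push_neg at hgt
      have hj1N : u.2 + 1 < m.length := by omega
      have hprev : p ++ [⊥] <+: m.drop (SA (u.2 + 1)) := by
        rcases eq_or_lt_of_le (show u.2 + 1 ≤ k by omega) with heq | hlt2
        · rw [heq]; exact hpref
        · exact lex_sandwich _ _ _ _ (hA1 u.2 hij le_rfl) hpref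
            (hlex u.2 (u.2 + 1) (by omega) hj1N) (hlex (u.2 + 1) k hlt2 hkN)
      have hlrsj : lrs m SA (u.2 + 1) = p.length := by
        unfold lrs
        rw [htw _ hprev]
      have hcontra : lcpP m SA (u.2 + 1) = lrs m SA (u.2 + 1) := by
        unfold lcpP
        rw [if_neg (Nat.succ_ne_zero _)]
        have hge := le_lcpLen (p ++ [⊥]) _ _ (hA1 u.2 hij le_rfl) hprev
        simp only [List.length_append, List.length_singleton] at hge
        simp only [Nat.add_sub_cancel]
        apply min_eq_right
        omega
      rcases hRb with h0 | hne
      · omega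
      · exact hne hcontra
  -- multiset bookkeeping
  have key : ((((List.range' u.1 (u.2 - u.1 + 1)).map SA : List ℕ)) : Multiset ℕ) =
      ((((List.range m.length).filter
        (fun q => decide (p ++ [⊥] <+: m.drop q)) : List ℕ)) : Multiset ℕ) := by
    have hnA : ((List.range' u.1 (u.2 - u.1 + 1)).map SA).Nodup := by
      apply List.Nodup.map_on ?_ List.nodup_range'
      intro x hx y hy hxy
      rw [List.mem_range'_1] at hx hy
      exact hbij.injOn (show x ∈ Set.Iio m.length by simp only [Set.mem_Iio]; omega)
        (show y ∈ Set.Iio m.length by simp only [Set.mem_Iio]; omega) hxy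
    have hnB : ((List.range m.length).filter
        (fun q => decide (p ++ [⊥] <+: m.drop q))).Nodup :=
      List.nodup_range.filter _
    rw [Multiset.Nodup.ext (Multiset.coe_nodup.mpr hnA) (Multiset.coe_nodup.mpr hnB)]
    intro q
    simp only [Multiset.mem_coe, List.mem_map, List.mem_range'_1, List.mem_filter,
      List.mem_range, decide_eq_true_eq]
    constructor
    · rintro ⟨k, ⟨hk1, hk2⟩, rfl⟩
      have hkN : k < m.length := by omega
      exact ⟨hmaps k hkN, hA1 k hk1 (by omega)⟩
    · rintro ⟨hqN, hpref⟩
      obtain ⟨k, hkmem, rfl⟩ := hbij.surjOn (show q ∈ Set.Iio m.length from hqN)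
      obtain ⟨h1, h2⟩ := hA2 k hkmem hpref
      exact ⟨k, ⟨h1, by omega⟩, rfl⟩
  have hLHS : (((List.range' u.1 (u.2 - u.1 + 1)).map (bwtArr m SA) :
      List (WithBot α)) : Multiset (WithBot α)) =
      Multiset.map (fun q => if q = 0 then (⊥ : WithBot α) else m.getD (q - 1) ⊥)
        (((List.range' u.1 (u.2 - u.1 + 1)).map SA : List ℕ) : Multiset ℕ) := by
    rw [Multiset.map_coe, List.map_map]
    rfl
  rw [hLHS, key, Multiset.map_coe]
  simp only [hdecPre, List.reverse_reverse, List.length_reverse]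
  exact occMain p hp P.strs

end BwtXbw
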